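/- Let {(Q_i, S_i, μ_i) : i ∈ I} be a family of fuzzy skill functions whose merge (Q, S, μ) is a distributed fuzzy skill function, let (Q, 𝒦) be the knowledge structure delineated by (Q, S, μ), and for each i ∈ I let (Q_i, 𝒦_i) be the knowledge structure delineated by (Q_i, S_i, μ_i). If the family {Q_i : i ∈ I} is pairwise disjoint, then: if (Q, 𝒦) is discriminative, each (Q_i, 𝒦_i) is discriminative; and if (Q, 𝒦) is bi-discriminative, each (Q_i, 𝒦_i) is bi-discriminative. -/
import Mathlib


/-- A fuzzy set on a set `S` of skills: a function `S → [0,1]`, ordered pointwise. -/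
abbrev FuzzySet (S : Type*) := S → unitInterval

/-- The problem function induced by a fuzzy skill multimap `μ`:
`p(F) = {q | ∃ C ∈ μ(q), C ⊆ F}`. -/
def pfun {Q S : Type*} (μ : Q → Set (FuzzySet S)) (F : FuzzySet S) : Set Q :=
  {q | ∃ C ∈ μ q, C ≤ F}

/-- The knowledge structure delineated by a fuzzy skill multimap `μ`. -/
def delineated {Q S : Type*} (μ : Q → Set (FuzzySet S)) : Set (Set Q) :=
  Set.range (pfun μ)

/-- `𝒦_q = {K ∈ 𝒦 | q ∈ K}`. -/
def Kq {Q : Type*} (𝒦 : Set (Set Q)) (q : Q) : Set (Set Q) := {K ∈ 𝒦 | q ∈ K}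

/-- A knowledge structure is discriminative if `𝒦_q ≠ 𝒦_r` for distinct `q, r`. -/
def Discriminative {Q : Type*} (𝒦 : Set (Set Q)) : Prop :=
  ∀ q r : Q, q ≠ r → Kq 𝒦 q ≠ Kq 𝒦 r

/-- A knowledge structure is bi-discriminative if `𝒦_q ⊄ 𝒦_r` and `𝒦_r ⊄ 𝒦_q`
for distinct `q, r`. -/
def BiDiscriminative {Q : Type*} (𝒦 : Set (Set Q)) : Prop :=
  ∀ q r : Q, q ≠ r → ¬ Kq 𝒦 q ⊆ Kq 𝒦 r ∧ ¬ Kq 𝒦 r ⊆ Kq 𝒦 q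

/-- `μ` is a fuzzy skill multimap: each `μ(q)` is a nonempty family of nonzero fuzzy sets. -/
def FSM {Q S : Type*} (μ : Q → Set (FuzzySet S)) : Prop :=
  ∀ q, (μ q).Nonempty ∧ ∀ C ∈ μ q, C ≠ 0

/-- A molecule: a fuzzy set with exactly one skill of nonzero membership. -/
def Molecule {S : Type*} (T : FuzzySet S) : Prop := ∃! s, T s ≠ 0

/-- A knowledge space: a knowledge structure closed under unions of arbitrary subfamilies. -/
def IsKSpace {Q : Type*} (𝒦 : Set (Set Q)) : Prop :=
  ∅ ∈ 𝒦 ∧ Set.univ ∈ 𝒦 ∧ ∀ 𝒮 ⊆ 𝒦, ⋃₀ 𝒮 ∈ 𝒦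

/-- For a family of fuzzy skill functions `(Q_i, S_i, μ_i)` whose merge
`(Q, S, μ)` is a distributed fuzzy skill function, if the item domains `Q_i` are
pairwise disjoint, then discriminativity (resp. bi-discriminativity) of the global
delineated structure implies that of each local delineated structure. -/
theorem stmt_17 {ι Q S : Type*} [Nonempty Q] [Nonempty S]
    (Qi : ι → Set Q) (Si : ι → Set S)
    (hQcover : ⋃ i, Qi i = Set.univ) (hScover : ⋃ i, Si i = Set.univ)
    (hQine : ∀ i, (Qi i).Nonempty) (hSine : ∀ i, (Si i).Nonempty)
    (μi : ι → Q → Set (FuzzySet S))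
    (hine : ∀ i, ∀ q ∈ Qi i, (μi i q).Nonempty)
    (hinz : ∀ i, ∀ q ∈ Qi i, ∀ C ∈ μi i q, C ≠ 0)
    (hvanish : ∀ i, ∀ q ∈ Qi i, ∀ C ∈ μi i q, ∀ s ∉ Si i, C s = 0)
    (hincomp : ∀ i, ∀ q ∈ Qi i, ∀ C ∈ μi i q, ∀ D ∈ μi i q, C ≤ D → C = D)
    (μ : Q → Set (FuzzySet S))
    (hμ : ∀ q, μ q = {C | ∃ i, q ∈ Qi i ∧ C ∈ μi i q})
    (hdistr : ∀ q, ∀ C ∈ μ q, ∀ D ∈ μ q, C ≤ D → C = D)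
    (Ki : ι → Set (Set Q))
    (hKi : ∀ i, Ki i = (fun F => {q ∈ Qi i | ∃ C ∈ μi i q, C ≤ F}) ''
      {F : FuzzySet S | ∀ s ∉ Si i, F s = 0})
    (hQdisj : ∀ i j, i ≠ j → Disjoint (Qi i) (Qi j)) :
    (Discriminative (delineated μ) →
      ∀ i, ∀ q ∈ Qi i, ∀ r ∈ Qi i, q ≠ r → Kq (Ki i) q ≠ Kq (Ki i) r) ∧
    (BiDiscriminative (delineated μ) →
      ∀ i, ∀ q ∈ Qi i, ∀ r ∈ Qi i, q ≠ r →
        ¬ Kq (Ki i) q ⊆ Kq (Ki i) r ∧ ¬ Kq (Ki i) r ⊆ Kq (Ki i) q) := by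
  classical
  have key : ∀ i, ∀ q ∈ Qi i, ∀ r ∈ Qi i,
      Kq (Ki i) q ⊆ Kq (Ki i) r → Kq (delineated μ) q ⊆ Kq (delineated μ) r := by
    intro i q hq r hr hsub K hK
    obtain ⟨hKmem, hqK⟩ := hK
    obtain ⟨F, rfl⟩ := hKmem
    obtain ⟨C, hC, hCF⟩ := hqK
    rw [hμ] at hC
    obtain ⟨j, hqj, hCj⟩ := hC
    have hji : j = i := by
      by_contra h
      exact Set.disjoint_left.mp (hQdisj j i h) hqj hq
    subst hji
    set Fi : FuzzySet S := fun s => if s ∈ Si j then F s else 0 with hFidef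
    have hFiF : Fi ≤ F := by
      intro s
      by_cases h : s ∈ Si j
      · simp [hFidef, h]
      · simpa [hFidef, h] using (F s).2.1
    have hCFi : C ≤ Fi := by
      intro s
      by_cases h : s ∈ Si j
      · simpa [hFidef, h] using hCF s
      · simp [hFidef, h, hvanish j q hqj C hCj s h]
    have hFiv : ∀ s ∉ Si j, Fi s = 0 := fun s hs => if_neg hs
    set L : Set Q := {p ∈ Qi j | ∃ D ∈ μi j p, D ≤ Fi} with hL
    have hLmem : L ∈ Ki j := by
      rw [hKi]
      exact ⟨Fi, hFiv, rfl⟩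
    have hLq : L ∈ Kq (Ki j) q := ⟨hLmem, hqj, C, hCj, hCFi⟩
    obtain ⟨_, hrQ, D, hD, hDFi⟩ := hsub hLq
    exact ⟨⟨F, rfl⟩, D, by rw [hμ]; exact ⟨j, hr, hD⟩, le_trans hDFi hFiF⟩
  constructor
  · intro hdisc i q hq r hr hne heq
    exact hdisc q r hne (subset_antisymm (key i q hq r hr heq.le) (key i r hr q hq heq.ge))
  · intro hbi i q hq r hr hne
    obtain ⟨h1, h2⟩ := hbi q r hne
    exact ⟨fun h => h1 (key i q hq r hr h), fun h => h2 (key i r hr q hq h)⟩
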